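/- Let n ≥ 2, W ∈ ℝⁿ, and S ⊆ {1,…,n} with K = |S|, 0 < K < n. Writing T = ∑_{i=1}^n W_i and t = ∑_{i∈S} W_i, the objective satisfies the identity D(S) = t²/K + (T−t)²/(n−K) = (n/(K(n−K)))·(t − K·T/n)² + T²/n. In particular, for fixed K, maximizing D(S) over masks S of size K is equivalent to maximizing |∑_{i∈S} W_i − K·T/n|. -/
import Mathlib

lemma dabnet_aux (n : ℕ) (K : ℕ) (hK0 : 0 < K) (hKn : K < n)
    (T t : ℝ) :
    t ^ 2 / (K : ℝ) + (T - t) ^ 2 / ((n : ℝ) - (K : ℝ))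
      = ((n : ℝ) / ((K : ℝ) * ((n : ℝ) - (K : ℝ)))) * (t - (K : ℝ) * T / (n : ℝ)) ^ 2
        + T ^ 2 / (n : ℝ) := by
  have h1 : (K : ℝ) ≠ 0 := by positivity
  have h2 : (n : ℝ) - (K : ℝ) ≠ 0 := by
    have : (K : ℝ) < (n : ℝ) := by exact_mod_cast hKn
    linarith
  have h3 : (n : ℝ) ≠ 0 := by
    have : 0 < n := lt_trans hK0 hKn
    positivity
  field_simp
  ring

theorem dabnet_objective_identity (n : ℕ) (hn : 2 ≤ n) (W : Fin n → ℝ)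
    (S : Finset (Fin n)) (K : ℕ) (hK : K = S.card) (hK0 : 0 < K) (hKn : K < n)
    (T t : ℝ) (hT : T = ∑ i, W i) (ht : t = ∑ i ∈ S, W i) :
    (t ^ 2 / (K : ℝ) + (T - t) ^ 2 / ((n : ℝ) - (K : ℝ))
      = ((n : ℝ) / ((K : ℝ) * ((n : ℝ) - (K : ℝ)))) * (t - (K : ℝ) * T / (n : ℝ)) ^ 2
        + T ^ 2 / (n : ℝ))
    ∧ ∀ S' : Finset (Fin n), S'.card = K →
        ((∑ i ∈ S, W i) ^ 2 / (K : ℝ) + (∑ i ∈ Sᶜ, W i) ^ 2 / ((n : ℝ) - (K : ℝ))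
            ≤ (∑ i ∈ S', W i) ^ 2 / (K : ℝ)
              + (∑ i ∈ S'ᶜ, W i) ^ 2 / ((n : ℝ) - (K : ℝ))
          ↔ |(∑ i ∈ S, W i) - (K : ℝ) * T / (n : ℝ)|
              ≤ |(∑ i ∈ S', W i) - (K : ℝ) * T / (n : ℝ)|) := by
  have hKR : (0 : ℝ) < (K : ℝ) := by exact_mod_cast hK0
  have hnK : (K : ℝ) < (n : ℝ) := by exact_mod_cast hKn
  have hc : (0 : ℝ) < (n : ℝ) / ((K : ℝ) * ((n : ℝ) - (K : ℝ))) := by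
    have : (0:ℝ) < (n:ℝ) := lt_trans hKR hnK
    have h2 : (0:ℝ) < (n : ℝ) - (K : ℝ) := by linarith
    positivity
  refine ⟨dabnet_aux n K hK0 hKn T t, fun S' hS' => ?_⟩
  have hcompl : ∀ A : Finset (Fin n), (∑ i ∈ Aᶜ, W i) = T - (∑ i ∈ A, W i) := by
    intro A
    have := Finset.sum_add_sum_compl A W
    rw [hT]; linarith
  rw [hcompl S, hcompl S', dabnet_aux n K hK0 hKn T (∑ i ∈ S, W i),
    dabnet_aux n K hK0 hKn T (∑ i ∈ S', W i)]
  constructor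
  · intro h
    exact sq_le_sq.mp (by nlinarith)
  · intro h
    nlinarith [sq_le_sq.mpr h]
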